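/- arXiv:1506.06521 — 3 statements merged into one kernel-verified Lean document; each statement's English description precedes it below -/
import Mathlib

section
/- Let G be a group, X a right G-set, E a Banach left G-module, and suppose there exists a right invariant mean m on B(X) extended to E*-valued functions (a norm-one linear operator m : B(X; E*) → E* fixing constants, invariant under right translations, and equivariant for the dual right G-action on E*). Let f : X → E* and h : G → E* satisfy ‖f(x·y) − f(x)·y − h(y)‖ ≤ δ for all x ∈ X, y ∈ G. Then H : G → E* defined by H(y) = m(x ↦ f(x·y) − f(x)·y) satisfies the cocycle identity H(yz) = H(y)·z + H(z) for all y, z ∈ G. -/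
/-- The approximate solution `f` of the generalized additive equation gives rise, via an
invariant equivariant mean `M` on `B(X; E*)`, to a map `H (y) = M (x ↦ f(x·y) − f(x)·y)`
satisfying the cocycle identity `H(yz) = H(y)·z + H(z)`. -/
theorem stmt_3 {G X E : Type*} [Group G]
    [NormedAddCommGroup E] [NormedSpace ℝ E] [CompleteSpace E]
    (act : X → G → X)
    (hact_one : ∀ x, act x 1 = x)
    (hact_mul : ∀ x y z, act x (y * z) = act (act x y) z)
    (ρ : G → E →L[ℝ] E)
    (hρ_one : ρ 1 = ContinuousLinearMap.id ℝ E)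
    (hρ_mul : ∀ (y y' : G) (ξ : E), ρ y (ρ y' ξ) = ρ (y * y') ξ)
    (hρ_iso : ∀ (y : G) (ξ : E), ‖ρ y ξ‖ = ‖ξ‖)
    (M : (X → StrongDual ℝ E) →ₗ[ℝ] StrongDual ℝ E)
    (hM_norm : ∀ (f : X → StrongDual ℝ E) (C : ℝ), (∀ x, ‖f x‖ ≤ C) → ‖M f‖ ≤ C)
    (hM_const : ∀ c : StrongDual ℝ E, M (fun _ => c) = c)
    (hM_inv : ∀ (f : X → StrongDual ℝ E) (y : G), M (fun x => f (act x y)) = M f)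
    (hM_equiv : ∀ (f : X → StrongDual ℝ E) (y : G),
      M (fun x => (f x).comp (ρ y)) = (M f).comp (ρ y))
    (δ : ℝ) (hδ : 0 < δ)
    (f : X → StrongDual ℝ E) (h : G → StrongDual ℝ E)
    (hfh : ∀ (x : X) (y : G), ‖f (act x y) - (f x).comp (ρ y) - h y‖ ≤ δ) :
    ∀ y z : G,
      M (fun x => f (act x (y * z)) - (f x).comp (ρ (y * z)))
        = (M (fun x => f (act x y) - (f x).comp (ρ y))).comp (ρ z)
          + M (fun x => f (act x z) - (f x).comp (ρ z)) := by
  intro y z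
  have key : (fun x => f (act x (y * z)) - (f x).comp (ρ (y * z)))
      = (fun x => ((f (act x y) - (f x).comp (ρ y)).comp (ρ z)))
        + (fun x => f (act (act x y) z) - (f (act x y)).comp (ρ z)) := by
    funext x
    have hc : ((f x).comp (ρ y)).comp (ρ z) = (f x).comp (ρ (y * z)) := by
      ext ξ; simp [ContinuousLinearMap.comp_apply, hρ_mul]
    simp only [Pi.add_apply, ContinuousLinearMap.sub_comp, hc, hact_mul]
    abel
  rw [key, map_add, hM_equiv]
  congr 1
  exact hM_inv (fun x => f (act x z) - (f x).comp (ρ z)) y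
end

section
/- Let G be a topological group, E a Banach space, H : G → E an additive map (H(yz) = H(y) + H(z) for all y, z ∈ G), and h : G → E a continuous map such that ‖H(y) − h(y)‖ ≤ δ for all y ∈ G and some constant δ > 0. Then H is continuous. -/
/-- Lemma 4.1: an additive map `H` at bounded distance from a continuous map `h`
on a topological group is continuous. -/
theorem stmt_8 {G E : Type*} [Group G] [TopologicalSpace G] [IsTopologicalGroup G]
    [NormedAddCommGroup E] [NormedSpace ℝ E] [CompleteSpace E]
    (H h : G → E)
    (hH_add : ∀ y z : G, H (y * z) = H y + H z)
    (hh_cont : Continuous h)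
    (δ : ℝ) (hδ : 0 < δ)
    (hHh : ∀ y : G, ‖H y - h y‖ ≤ δ) :
    Continuous H := by
  have hHe : H 1 = 0 := by
    have h1 := hH_add 1 1
    rw [mul_one] at h1
    exact (left_eq_add.mp h1)
  have hpow : ∀ (y : G) (k : ℕ), H (y ^ k) = (k : ℝ) • H y := by
    intro y k
    induction k with
    | zero => simp [hHe]
    | succ n ih =>
      rw [pow_succ, hH_add, ih, Nat.cast_succ, add_smul, one_smul]
  -- continuity at 1
  have key : Filter.Tendsto H (nhds 1) (nhds 0) := by
    rw [NormedAddCommGroup.tendsto_nhds_zero]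
    intro ε hε
    obtain ⟨k, hk⟩ : ∃ k : ℕ, 3 * δ < k * ε := by
      obtain ⟨k, hk⟩ := exists_nat_gt (3 * δ / ε)
      exact ⟨k, by rwa [div_lt_iff₀ hε] at hk⟩
    have hkpos : (0 : ℝ) < k := by
      by_contra hc
      push_neg at hc
      have : (k : ℝ) * ε ≤ 0 := mul_nonpos_of_nonpos_of_nonneg hc hε.le
      linarith
    have hcont : Continuous fun y : G => h (y ^ k) :=
      hh_cont.comp (continuous_pow k)
    have hev : ∀ᶠ y in nhds (1 : G), ‖h (y ^ k) - h 1‖ < δ := by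
      have ht : Filter.Tendsto (fun y : G => h (y ^ k)) (nhds 1) (nhds (h 1)) := by
        exact hcont.tendsto' 1 (h 1) (by simp)
      have := ht (Metric.ball_mem_nhds (h 1) hδ)
      filter_upwards [this] with y hy
      simpa [dist_eq_norm] using hy
    filter_upwards [hev] with y hy
    have h1 : ‖H (y ^ k)‖ < 3 * δ := by
      have e1 : ‖H (y ^ k) - h (y ^ k)‖ ≤ δ := hHh (y ^ k)
      have e3 : ‖h 1‖ ≤ δ := by
        have := hHh 1
        rwa [hHe, zero_sub, norm_neg] at this
      calc ‖H (y ^ k)‖ ≤ ‖H (y ^ k) - h (y ^ k)‖ + ‖h (y ^ k) - h 1‖ + ‖h 1‖ := by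
            have := norm_add₃_le (a := H (y ^ k) - h (y ^ k)) (b := h (y ^ k) - h 1) (c := h 1)
            simpa using this
        _ < δ + δ + δ := by
            have := add_lt_add_of_le_of_lt e1 hy
            linarith
        _ = 3 * δ := by ring
    rw [hpow, norm_smul, Real.norm_natCast] at h1
    have : (k : ℝ) * ‖H y‖ < (k : ℝ) * ε := lt_trans h1 hk
    exact lt_of_mul_lt_mul_left this hkpos.le
  rw [continuous_iff_continuousAt]
  intro x
  have ht : Filter.Tendsto (fun z : G => x⁻¹ * z) (nhds x) (nhds 1) := by
    have : Continuous fun z : G => x⁻¹ * z := continuous_const.mul continuous_id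
    exact this.tendsto' x 1 (by simp)
  have : Filter.Tendsto (fun z : G => H x + H (x⁻¹ * z)) (nhds x) (nhds (H x + 0)) :=
    Filter.Tendsto.add tendsto_const_nhds (key.comp ht)
  rw [add_zero] at this
  refine this.congr fun z => ?_
  rw [← hH_add, mul_inv_cancel_left]
end

section
/- Let G be a strongly amenable topological group, L a closed subgroup such that the canonical projection π : G → G/L is a fiber bundle, X = G/L the right G-space of right cosets, and E a Banach space. Suppose h : G → E* and f : X → E* are continuous and satisfy ‖f(x·y) − f(x) − h(y)‖ ≤ δ for all x ∈ X, y ∈ G. Then there exist continuous maps H : G → E* and F : X → E* with H(yz) = H(y) + H(z), F(x·y) = F(x) + H(y), ‖H(y) − h(y)‖ ≤ δ, and ‖F(x) − f(x)‖ ≤ 2δ. -/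
open NormedSpace Filter Topology

/-- Right action of `G` on the quotient by `rightRel L`. -/
def ract {G : Type*} [Group G] (L : Subgroup G)
    (x : Quotient (QuotientGroup.rightRel L)) (y : G) :
    Quotient (QuotientGroup.rightRel L) :=
  Quotient.liftOn x (fun g => Quotient.mk (QuotientGroup.rightRel L) (g * y))
    (fun a b hab => Quotient.sound (by
      have hab' : b * a⁻¹ ∈ L := QuotientGroup.rightRel_apply.mp hab
      have key : b * y * (a * y)⁻¹ ∈ L := by
        have : b * y * (a * y)⁻¹ = b * a⁻¹ := by group
        rw [this]; exact hab'
      exact QuotientGroup.rightRel_apply.mpr key))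

theorem ract_mk {G : Type*} [Group G] (L : Subgroup G) (g y : G) :
    ract L (Quotient.mk (QuotientGroup.rightRel L) g) y
      = Quotient.mk (QuotientGroup.rightRel L) (g * y) := rfl

theorem ract_mul {G : Type*} [Group G] (L : Subgroup G)
    (x : Quotient (QuotientGroup.rightRel L)) (a b : G) :
    ract L (ract L x a) b = ract L x (a * b) := by
  induction x using Quotient.inductionOn with
  | h g => simp [ract_mk, mul_assoc]

/-- Averaging a bounded continuous family of functionals with an invariant mean. -/
noncomputable def meanDual {G : Type*} [TopologicalSpace G]
    {E : Type*} [NormedAddCommGroup E] [NormedSpace ℝ E]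
    (m : (G → ℝ) →ₗ[ℝ] ℝ)
    (hb : ∀ (g : G → ℝ) (C : ℝ), Continuous g → (∀ y, |g y| ≤ C) → |m g| ≤ C)
    (A : G → StrongDual ℝ E) (C : ℝ) (hA : Continuous A) (hbd : ∀ y, ‖A y‖ ≤ C) :
    StrongDual ℝ E :=
  LinearMap.mkContinuous
    { toFun := fun e => m (fun y => A y e)
      map_add' := fun e e' => by
        have h1 : (fun y => A y (e + e')) = (fun y => A y e) + (fun y => A y e') := by
          funext y; simp
        show m _ = m _ + m _
        rw [h1, map_add]
      map_smul' := fun c e => by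
        have h1 : (fun y => A y (c • e)) = c • (fun y => A y e) := by
          funext y; simp
        show m _ = _ • m _
        rw [h1, map_smul]; rfl } C
    (fun e => by
      have hc : Continuous fun y => A y e :=
        (ContinuousLinearMap.apply ℝ ℝ e).continuous.comp hA
      have hB : ∀ y, |A y e| ≤ C * ‖e‖ := fun y => by
        calc |A y e| = ‖A y e‖ := rfl
          _ ≤ ‖A y‖ * ‖e‖ := (A y).le_opNorm e
          _ ≤ C * ‖e‖ := mul_le_mul_of_nonneg_right (hbd y) (norm_nonneg e)
      simpa using hb _ (C * ‖e‖) hc hB)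

theorem meanDual_apply {G : Type*} [TopologicalSpace G]
    {E : Type*} [NormedAddCommGroup E] [NormedSpace ℝ E]
    (m : (G → ℝ) →ₗ[ℝ] ℝ) (hb) (A : G → StrongDual ℝ E) (C : ℝ) (hA) (hbd) (e : E) :
    meanDual m hb A C hA hbd e = m (fun y => A y e) := rfl

/-- Theorem 4.2: Hyers–Ulam stability of the additive equation for continuous functions on a
homogeneous space `X = G/L` (right cosets) of a strongly amenable topological group `G`,
provided the canonical projection `G → G/L` is a fiber bundle (equivalently, admits local
cross sections around every point). -/
theorem stmt_10 {G E : Type*} [Group G] [TopologicalSpace G] [IsTopologicalGroup G]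
    [NormedAddCommGroup E] [NormedSpace ℝ E] [CompleteSpace E]
    (L : Subgroup G) (hL : IsClosed (L : Set G))
    -- the projection `G → G/L` is a fiber bundle: local cross sections around every point
    (hsec : ∀ p : Quotient (QuotientGroup.rightRel L),
      ∃ U : Set (Quotient (QuotientGroup.rightRel L)), IsOpen U ∧ p ∈ U ∧
        ∃ s : Quotient (QuotientGroup.rightRel L) → G, ContinuousOn s U ∧
          ∀ q ∈ U, Quotient.mk (QuotientGroup.rightRel L) (s q) = q)
    -- strong amenability of `G`: a right invariant mean on `CB(G)`
    (hamen : ∃ m : (G → ℝ) →ₗ[ℝ] ℝ, m 1 = 1 ∧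
      (∀ (g : G → ℝ) (C : ℝ), Continuous g → (∀ y, |g y| ≤ C) → |m g| ≤ C) ∧
      (∀ (g : G → ℝ), Continuous g → (∃ C, ∀ y, |g y| ≤ C) →
        ∀ z : G, m (fun y => g (y * z)) = m g))
    (δ : ℝ) (hδ : 0 < δ)
    (h : G → StrongDual ℝ E) (hh_cont : Continuous h)
    (f : Quotient (QuotientGroup.rightRel L) → StrongDual ℝ E) (hf_cont : Continuous f)
    (hfh : ∀ g y : G,
      ‖f (Quotient.mk (QuotientGroup.rightRel L) (g * y))
        - f (Quotient.mk (QuotientGroup.rightRel L) g) - h y‖ ≤ δ) :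
    ∃ (H : G → StrongDual ℝ E)
      (F : Quotient (QuotientGroup.rightRel L) → StrongDual ℝ E),
      Continuous H ∧ Continuous F ∧
      (∀ y z : G, H (y * z) = H y + H z) ∧
      (∀ g y : G,
        F (Quotient.mk (QuotientGroup.rightRel L) (g * y))
          = F (Quotient.mk (QuotientGroup.rightRel L) g) + H y) ∧
      (∀ y : G, ‖H y - h y‖ ≤ δ) ∧
      (∀ x : Quotient (QuotientGroup.rightRel L), ‖F x - f x‖ ≤ 2 * δ) := by
  classical
  obtain ⟨m, hm1, hmb, hminv⟩ := hamen
  set q : G → Quotient (QuotientGroup.rightRel L) :=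
    Quotient.mk (QuotientGroup.rightRel L) with hq_def
  have hq : Continuous q := continuous_quot_mk
  -- evaluation is continuous
  have heval : ∀ e : E, Continuous fun φ : StrongDual ℝ E => φ e := fun e =>
    (ContinuousLinearMap.apply ℝ ℝ e).continuous
  -- the mean of a constant
  have mconst : ∀ c : ℝ, m (fun _ : G => c) = c := by
    intro c
    have h1 : (fun _ : G => c) = c • (1 : G → ℝ) := by funext y; simp
    rw [h1, map_smul, hm1, smul_eq_mul, mul_one]
  -- key pointwise estimate
  have key1 : ∀ x y, ‖f x - f (ract L x y⁻¹) - h y‖ ≤ δ := by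
    intro x y
    induction x using Quotient.inductionOn with
    | h g =>
      have := hfh (g * y⁻¹) y
      simpa [ract_mk, mul_assoc] using this
  have bndF : ∀ x y, ‖f (ract L x y⁻¹) + h y‖ ≤ ‖f x‖ + δ := by
    intro x y
    have h1 : f (ract L x y⁻¹) + h y = f x - (f x - f (ract L x y⁻¹) - h y) := by abel
    rw [h1]
    exact (norm_sub_le _ _).trans (by have := key1 x y; linarith)
  have contract : ∀ x, Continuous fun y : G => ract L x y⁻¹ := by
    intro x
    induction x using Quotient.inductionOn with
    | h g =>
      show Continuous fun y : G => q (g * y⁻¹)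
      exact hq.comp (continuous_const.mul continuous_inv)
  have contF : ∀ x, Continuous fun y : G => f (ract L x y⁻¹) + h y := fun x =>
    ((hf_cont.comp (contract x)).add hh_cont)
  have contH : ∀ z : G, Continuous fun y : G => f (q (y * z)) - f (q y) := fun z =>
    ((hf_cont.comp (hq.comp (continuous_mul_right z))).sub (hf_cont.comp hq))
  have bndH : ∀ z y : G, ‖f (q (y * z)) - f (q y)‖ ≤ ‖h z‖ + δ := by
    intro z y
    have h1 : f (q (y * z)) - f (q y) = (f (q (y * z)) - f (q y) - h z) + h z := by abel
    rw [h1]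
    exact (norm_add_le _ _).trans (by have := hfh y z; linarith)
  -- the maps
  set F : Quotient (QuotientGroup.rightRel L) → StrongDual ℝ E := fun x =>
    meanDual m hmb (fun y => f (ract L x y⁻¹) + h y) (‖f x‖ + δ) (contF x) (bndF x) with hF_def
  set H : G → StrongDual ℝ E := fun z =>
    meanDual m hmb (fun y => f (q (y * z)) - f (q y)) (‖h z‖ + δ) (contH z) (bndH z) with hH_def
  -- ‖H z - h z‖ ≤ δ
  have Hbound : ∀ z, ‖H z - h z‖ ≤ δ := by
    intro z
    refine ContinuousLinearMap.opNorm_le_bound _ hδ.le fun e => ?_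
    have h1 : (H z - h z) e = m (fun y => (f (q (y * z)) - f (q y) - h z) e) := by
      have h2 : (fun y => (f (q (y * z)) - f (q y) - h z) e)
          = (fun y => (f (q (y * z)) - f (q y)) e) - (fun _ => h z e) := by
        funext y; simp
      rw [h2, map_sub, mconst]
      simp [hH_def, meanDual_apply]
    rw [h1]
    have hcont : Continuous fun y => (f (q (y * z)) - f (q y) - h z) e :=
      (heval e).comp ((contH z).sub continuous_const)
    have hbd : ∀ y, |(f (q (y * z)) - f (q y) - h z) e| ≤ δ * ‖e‖ := fun y =>
      ((f (q (y * z)) - f (q y) - h z).le_opNorm e).trans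
        (mul_le_mul_of_nonneg_right (hfh y z) (norm_nonneg e))
    exact hmb _ (δ * ‖e‖) hcont hbd
  -- ‖F x - f x‖ ≤ δ
  have Fbound : ∀ x, ‖F x - f x‖ ≤ δ := by
    intro x
    refine ContinuousLinearMap.opNorm_le_bound _ hδ.le fun e => ?_
    have h1 : (F x - f x) e = m (fun y => (f (ract L x y⁻¹) + h y - f x) e) := by
      have h2 : (fun y => (f (ract L x y⁻¹) + h y - f x) e)
          = (fun y => (f (ract L x y⁻¹) + h y) e) - (fun _ => f x e) := by
        funext y; simp
      rw [h2, map_sub, mconst]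
      simp [hF_def, meanDual_apply]
    rw [h1]
    have hcont : Continuous fun y => (f (ract L x y⁻¹) + h y - f x) e :=
      (heval e).comp ((contF x).sub continuous_const)
    have hbd : ∀ y, |(f (ract L x y⁻¹) + h y - f x) e| ≤ δ * ‖e‖ := fun y => by
      have h3 : f (ract L x y⁻¹) + h y - f x = -(f x - f (ract L x y⁻¹) - h y) := by abel
      rw [h3]
      refine ((-(f x - f (ract L x y⁻¹) - h y)).le_opNorm e).trans ?_
      rw [norm_neg]
      exact mul_le_mul_of_nonneg_right (key1 x y) (norm_nonneg e)
    exact hmb _ (δ * ‖e‖) hcont hbd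
  -- F (x · z) = F x + H z
  have Fadd : ∀ x z, F (ract L x z) = F x + H z := by
    intro x z
    ext e
    -- the translated integrand for F (ract L x z)
    set φ : G → ℝ := fun y => (f (ract L x (z * y⁻¹)) + h y) e with hφ
    have hφ' : φ = fun y => (f (ract L (ract L x z) y⁻¹) + h y) e := by
      funext y; rw [hφ]; rw [ract_mul]
    have contφ : Continuous φ := by
      rw [hφ']; exact (heval e).comp (contF (ract L x z))
    have bdφ : ∀ y, |φ y| ≤ (‖f (ract L x z)‖ + δ) * ‖e‖ := by
      intro y
      rw [hφ']
      exact ((f (ract L (ract L x z) y⁻¹) + h y).le_opNorm e).trans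
        (mul_le_mul_of_nonneg_right (bndF (ract L x z) y) (norm_nonneg e))
    -- ψ : the auxiliary bounded function
    set ψ : G → ℝ := fun y => (h y - f (q y)) e with hψ
    have bdψ' : ∀ y : G, ‖h y - f (q y)‖ ≤ δ + ‖f (q 1)‖ := by
      intro y
      have h4 : h y - f (q y) = -(f (q (1 * y)) - f (q 1) - h y) - f (q 1) := by
        rw [one_mul]; abel
      rw [h4]
      refine (norm_sub_le _ _).trans ?_
      rw [norm_neg]
      exact add_le_add (hfh 1 y) le_rfl
    have contψ : Continuous ψ := (heval e).comp (hh_cont.sub (hf_cont.comp hq))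
    have bdψ : ∀ y, |ψ y| ≤ (δ + ‖f (q 1)‖) * ‖e‖ := fun y =>
      ((h y - f (q y)).le_opNorm e).trans
        (mul_le_mul_of_nonneg_right (bdψ' y) (norm_nonneg e))
    -- invariance for φ
    have inv1 : m (fun y => φ (y * z)) = m φ :=
      hminv φ contφ ⟨_, bdφ⟩ z
    -- invariance for ψ
    have inv2 : m (fun y => ψ (y * z)) = m ψ :=
      hminv ψ contψ ⟨_, bdψ⟩ z
    -- LHS value
    have hL1 : F (ract L x z) e = m φ := by
      rw [hφ']; simp [hF_def, meanDual_apply]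
    -- translate
    have hφz : (fun y => φ (y * z)) = fun y => f (ract L x y⁻¹) e + h (y * z) e := by
      funext y
      rw [hφ]
      have : z * (y * z)⁻¹ = y⁻¹ := by group
      simp [this]
    -- decomposition
    have hdec : (fun y => f (ract L x y⁻¹) e + h (y * z) e)
        = (fun y => (f (ract L x y⁻¹) + h y) e)
          + (fun y => (f (q (y * z)) - f (q y)) e)
          + ((fun y => ψ (y * z)) - ψ) := by
      funext y
      simp only [Pi.add_apply, Pi.sub_apply, hψ, ContinuousLinearMap.add_apply,
        ContinuousLinearMap.sub_apply]
      ring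
    have hm2 : m (fun y => f (ract L x y⁻¹) e + h (y * z) e)
        = m (fun y => (f (ract L x y⁻¹) + h y) e)
          + m (fun y => (f (q (y * z)) - f (q y)) e)
          + (m (fun y => ψ (y * z)) - m ψ) := by
      rw [hdec]
      rw [map_add, map_add, map_sub]
    have hR : (F x + H z) e
        = m (fun y => (f (ract L x y⁻¹) + h y) e)
          + m (fun y => (f (q (y * z)) - f (q y)) e) := by
      simp [hF_def, hH_def, meanDual_apply]
    rw [hR, hL1, ← inv1, hφz, hm2, inv2]
    ring
  -- H is additive
  have Hadd : ∀ y z : G, H (y * z) = H y + H z := by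
    intro z₁ z₂
    ext e
    set χ : G → ℝ := fun w => (f (q (w * z₂)) - f (q w)) e with hχ
    have contχ : Continuous χ := (heval e).comp (contH z₂)
    have bdχ : ∀ w, |χ w| ≤ (‖h z₂‖ + δ) * ‖e‖ := fun w =>
      ((f (q (w * z₂)) - f (q w)).le_opNorm e).trans
        (mul_le_mul_of_nonneg_right (bndH z₂ w) (norm_nonneg e))
    have inv : m (fun w => χ (w * z₁)) = m χ := hminv χ contχ ⟨_, bdχ⟩ z₁
    have hdec : (fun w => (f (q (w * (z₁ * z₂))) - f (q w)) e)
        = (fun w => χ (w * z₁)) + (fun w => (f (q (w * z₁)) - f (q w)) e) := by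
      funext w
      simp only [Pi.add_apply, hχ, ContinuousLinearMap.sub_apply, ← mul_assoc]
      ring
    have : H (z₁ * z₂) e = m (fun w => χ (w * z₁)) + H z₁ e := by
      simp only [hH_def, meanDual_apply]
      rw [hdec, map_add]
    rw [this, inv]
    have : m χ = H z₂ e := by simp [hH_def, hχ, meanDual_apply]
    rw [this]
    simp [add_comm]
  -- H 1 = 0
  have H1 : H 1 = 0 := by
    have t := Hadd 1 1
    rw [one_mul] at t
    exact (left_eq_add.mp t)
  -- H of powers
  have Hpow : ∀ (n : ℕ) (z : G), H (z ^ (n + 1)) = ((n : ℝ) + 1) • H z := by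
    intro n z
    induction n with
    | zero => simp
    | succ k ih =>
      have : z ^ (k + 2) = z ^ (k + 1) * z := by
        rw [pow_succ]
      rw [this, Hadd, ih]
      push_cast
      module
  -- ‖h 1‖ ≤ δ
  have hh1 : ‖h 1‖ ≤ δ := by
    have := hfh 1 1
    simpa using this
  -- bound for H near 1
  set U : Set G := {w | ‖h w - h 1‖ < 1} with hU_def
  have openU : IsOpen U := by
    have : U = (fun w => ‖h w - h 1‖) ⁻¹' Set.Iio 1 := rfl
    rw [this]
    exact IsOpen.preimage ((hh_cont.sub continuous_const).norm) isOpen_Iio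
  have oneU : (1 : G) ∈ U := by simp [hU_def]
  have hUbd : ∀ w ∈ U, ‖H w‖ ≤ 2 * δ + 1 := by
    intro w hw
    have h1 : H w = (H w - h w) + (h w - h 1) + h 1 := by abel
    rw [h1]
    have := Hbound w
    have h2 : ‖h w - h 1‖ < 1 := hw
    calc ‖(H w - h w) + (h w - h 1) + h 1‖
        ≤ ‖(H w - h w) + (h w - h 1)‖ + ‖h 1‖ := norm_add_le _ _
      _ ≤ ‖H w - h w‖ + ‖h w - h 1‖ + ‖h 1‖ := by
          have := norm_add_le (H w - h w) (h w - h 1); linarith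
      _ ≤ 2 * δ + 1 := by linarith
  -- continuity of H at 1
  have HcontAt1 : Tendsto H (𝓝 (1 : G)) (𝓝 0) := by
    rw [NormedAddCommGroup.tendsto_nhds_zero]
    intro ε hε
    obtain ⟨n, hn⟩ := exists_nat_gt ((2 * δ + 1) / ε)
    have hn' : (2 * δ + 1) / ((n : ℝ) + 1) < ε := by
      rw [div_lt_iff₀ (by positivity)]
      have h2 : (2 * δ + 1) / ε < (n : ℝ) + 1 := by
        have : (n : ℝ) ≤ (n : ℝ) + 1 := by linarith
        linarith
      calc 2 * δ + 1 = ((2 * δ + 1) / ε) * ε := by field_simp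
        _ < ((n : ℝ) + 1) * ε := by
            apply mul_lt_mul_of_pos_right h2 hε
        _ = ε * ((n : ℝ) + 1) := by ring
    have hV : {w : G | w ^ (n + 1) ∈ U} ∈ 𝓝 (1 : G) := by
      have : IsOpen {w : G | w ^ (n + 1) ∈ U} :=
        IsOpen.preimage (continuous_pow (n + 1)) openU
      refine this.mem_nhds ?_
      simp [oneU]
    filter_upwards [hV] with w hw
    have hHw : ((n : ℝ) + 1) * ‖H w‖ ≤ 2 * δ + 1 := by
      have h3 : ‖H (w ^ (n + 1))‖ = ((n : ℝ) + 1) * ‖H w‖ := by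
        rw [Hpow n w, norm_smul]
        simp [abs_of_nonneg (by positivity : (0:ℝ) ≤ (n:ℝ) + 1)]
      have := hUbd _ hw
      rw [h3] at this
      exact this
    have : ‖H w‖ ≤ (2 * δ + 1) / ((n : ℝ) + 1) := by
      rw [le_div_iff₀ (by positivity)]
      linarith [hHw]
    exact lt_of_le_of_lt this hn'
  -- continuity of H
  have Hcont : Continuous H := by
    rw [continuous_iff_continuousAt]
    intro z₀
    have key : ∀ z, H z = H (z * z₀⁻¹) + H z₀ := by
      intro z
      rw [← Hadd]
      congr 1
      group
    have t1 : Tendsto (fun z => z * z₀⁻¹) (𝓝 z₀) (𝓝 1) := by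
      have := (continuous_mul_right z₀⁻¹).tendsto z₀
      simpa using this
    have t2 : Tendsto (fun z => H (z * z₀⁻¹) + H z₀) (𝓝 z₀) (𝓝 (H z₀)) := by
      have h5 := (HcontAt1.comp t1).add (tendsto_const_nhds (x := H z₀))
      simpa using h5
    have hfun : H = fun z => H (z * z₀⁻¹) + H z₀ := funext key
    unfold ContinuousAt
    rw [hfun]
    simpa [H1] using t2
  -- relation of F to H
  have Fπ : ∀ g : G, F (q g) = F (q 1) + H g := by
    intro g
    have := Fadd (q 1) g
    rw [show ract L (q 1) g = q g from by rw [hq_def, ract_mk, one_mul]] at this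
    exact this
  -- continuity of F
  have Fcont : Continuous F := by
    have hcomp : Continuous fun g : G => F (q g) := by
      have : (fun g : G => F (q g)) = fun g => F (q 1) + H g := funext Fπ
      rw [this]
      exact continuous_const.add Hcont
    exact isQuotientMap_quot_mk.continuous_iff.mpr hcomp
  -- main equation for F on cosets
  have Ffun : ∀ g y : G, F (q (g * y)) = F (q g) + H y := by
    intro g y
    rw [Fπ (g * y), Fπ g, Hadd, add_assoc]
  refine ⟨H, F, Hcont, Fcont, Hadd, Ffun, Hbound, fun x => (Fbound x).trans (by linarith)⟩
end
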